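/- Let 0 < a < 1, let ρ̄ be a probability density on [0,1] with ρ̄(y) ≤ C y^{-(1-a)/2}, and let W_n : ℝ → [0,∞) be even, supported in [-1/n,1/n], with W_n(r) ≤ C'|r|^{-a}. Then for all 2/n ≤ x ≤ 1/2, (W_n * ρ̄)(x) ≤ C'' n^{-1+a} (x - 1/n)^{-(1-a)/2}. -/

import Mathlib

open MeasureTheory

lemma absRpowII (a : ℝ) (ha0 : 0 < a) (ha1 : a < 1) (h : ℝ) (hh : 0 < h) :
    IntervalIntegrable (fun u : ℝ => |u| ^ (-a)) volume (-h) h ∧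
    (∫ u in (-h)..h, |u| ^ (-a)) = 2 * h ^ (1 - a) / (1 - a) := by
  have hexp : (-1 : ℝ) < -a := by linarith
  have II1 : IntervalIntegrable (fun u : ℝ => u ^ (-a)) volume 0 h :=
    intervalIntegral.intervalIntegrable_rpow' hexp
  have IIa : IntervalIntegrable (fun u : ℝ => |u| ^ (-a)) volume 0 h := by
    rw [intervalIntegrable_iff_integrableOn_Ioc_of_le hh.le] at II1 ⊢
    exact II1.congr_fun (fun u hu => by rw [abs_of_pos hu.1]) measurableSet_Ioc
  have IIb : IntervalIntegrable (fun u : ℝ => |u| ^ (-a)) volume (-h) 0 := by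
    have := (IntervalIntegrable.iff_comp_neg).mp IIa
    simp only [abs_neg, neg_zero] at this
    exact this.symm
  refine ⟨IIb.trans IIa, ?_⟩
  have hsplit : (∫ u in (-h)..(0:ℝ), |u| ^ (-a)) + ∫ u in (0:ℝ)..h, |u| ^ (-a)
      = ∫ u in (-h)..h, |u| ^ (-a) :=
    intervalIntegral.integral_add_adjacent_intervals IIb IIa
  have hneg : (∫ u in (-h)..(0:ℝ), |u| ^ (-a)) = ∫ u in (0:ℝ)..h, |u| ^ (-a) := by
    have := intervalIntegral.integral_comp_neg (fun u : ℝ => |u| ^ (-a)) (a := 0) (b := h)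
    simp only [abs_neg, neg_zero] at this
    exact this.symm
  have hval : (∫ u in (0:ℝ)..h, |u| ^ (-a)) = h ^ (1 - a) / (1 - a) := by
    have hco : (∫ u in (0:ℝ)..h, |u| ^ (-a)) = ∫ u in (0:ℝ)..h, u ^ (-a) := by
      refine intervalIntegral.integral_congr (fun u hu => ?_)
      rw [Set.uIcc_of_le hh.le] at hu
      rw [abs_of_nonneg hu.1]
    rw [hco, integral_rpow (Or.inl hexp)]
    rw [Real.zero_rpow (by linarith : -a + 1 ≠ 0)]
    ring_nf
  rw [← hsplit, hneg, hval]; ring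

theorem stmt17 (a C C' : ℝ) (ha0 : 0 < a) (ha1 : a < 1) (hC : 0 < C) (hC' : 0 < C') :
    ∃ C'' > 0, ∀ n : ℕ, 1 ≤ n → ∀ ρ Wn : ℝ → ℝ,
      (∀ y, 0 ≤ ρ y) → (∀ y, y ∉ Set.Icc (0:ℝ) 1 → ρ y = 0) →
      (∫ y, ρ y) = 1 →
      (∀ y ∈ Set.Ioo (0:ℝ) 1, ρ y ≤ C * y ^ (-(1-a)/2)) →
      (∀ r, Wn (-r) = Wn r) → (∀ r, 0 ≤ Wn r) →
      (Function.support Wn ⊆ Set.Icc (-(1/(n:ℝ))) (1/(n:ℝ))) →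
      (∀ r : ℝ, r ≠ 0 → Wn r ≤ C' * |r| ^ (-a)) →
      ∀ x ∈ Set.Icc (2/(n:ℝ)) (1/2),
        (∫ y, Wn (x - y) * ρ y) ≤ C'' * (n:ℝ) ^ (-1+a) * (x - 1/(n:ℝ)) ^ (-(1-a)/2) := by
  have h1a : 0 < 1 - a := by linarith
  refine ⟨2 * C * C' / (1 - a), div_pos (by positivity) h1a, ?_⟩
  intro n hn ρ Wn hρ0 hρsupp hρint hρbd hWeven hW0 hWsupp hWbd x hx
  have hn0 : (0:ℝ) < n := by exact_mod_cast hn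
  set h : ℝ := 1 / (n:ℝ) with hhdef
  have hh0 : 0 < h := by positivity
  have hn4 : (4:ℝ) ≤ n := by
    have h2 := hx.1.trans hx.2
    rw [div_le_div_iff₀ hn0 two_pos] at h2; linarith
  have hh4 : h ≤ 1/4 := by
    rw [hhdef, div_le_div_iff₀ hn0 (by norm_num : (0:ℝ) < 4)]; linarith
  set t : ℝ := x - h with htdef
  have hth : h ≤ t := by
    have h1 := hx.1
    have e : 2/(n:ℝ) = 1/(n:ℝ) + 1/(n:ℝ) := by ring
    simp only [htdef, hhdef]; linarith
  have ht0 : 0 < t := lt_of_lt_of_le hh0 hth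
  have hte : (0:ℝ) ≤ t ^ (-(1-a)/2) := Real.rpow_nonneg ht0.le _
  set K : ℝ := C * t ^ (-(1-a)/2) * C' with hKdef
  have hK0 : 0 ≤ K := by positivity
  obtain ⟨II, Ival⟩ := absRpowII a ha0 ha1 h hh0
  -- integrability of the dominating function
  have IIc : IntervalIntegrable (fun y : ℝ => K * |x - y| ^ (-a)) volume (x-h) (x+h) := by
    have := (II.comp_sub_left x).symm
    have h2 : x - h = x - h ∧ x - -h = x + h := ⟨rfl, by ring⟩
    rw [h2.2] at this
    exact this.const_mul K
  set g : ℝ → ℝ := Set.indicator (Set.Icc (x-h) (x+h)) (fun y => K * |x - y| ^ (-a)) with hgdef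
  have hgnn : ∀ y, 0 ≤ g y := fun y =>
    Set.indicator_nonneg (fun y _ => by positivity) y
  have hg : Integrable g := by
    rw [hgdef, integrable_indicator_iff measurableSet_Icc]
    rw [integrableOn_Icc_iff_integrableOn_Ioc]
    rw [← intervalIntegrable_iff_integrableOn_Ioc_of_le (by linarith : x - h ≤ x + h)]
    exact IIc
  -- the value of ∫ g
  have hgval : (∫ y, g y) = K * (2 * h ^ (1-a) / (1-a)) := by
    rw [hgdef, integral_indicator measurableSet_Icc, integral_Icc_eq_integral_Ioc,
      ← intervalIntegral.integral_of_le (by linarith : x - h ≤ x + h),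
      intervalIntegral.integral_const_mul]
    have := intervalIntegral.integral_comp_sub_left (fun u : ℝ => |u| ^ (-a)) x
      (a := x - h) (b := x + h)
    have he1 : x - (x + h) = -h := by ring
    have he2 : x - (x - h) = h := by ring
    rw [he1, he2] at this
    rw [this, Ival]
  -- pointwise bound away from y = x
  have hpt : ∀ y : ℝ, y ≠ x → Wn (x - y) * ρ y ≤ g y := by
    intro y hy
    by_cases hWz : Wn (x - y) = 0
    · rw [hWz, zero_mul]; exact hgnn y
    · have hmem := hWsupp (Function.mem_support.mpr hWz)
      have hy1 : x - h ≤ y := by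
        have := hmem.2; linarith
      have hy2 : y ≤ x + h := by have := hmem.1; linarith
      have hyIoo : y ∈ Set.Ioo (0:ℝ) 1 := by
        constructor
        · calc (0:ℝ) < h := hh0
            _ ≤ t := hth
            _ = x - h := rfl
            _ ≤ y := hy1
        · have := hx.2; calc y ≤ x + h := hy2
            _ ≤ 1/2 + 1/4 := by linarith
            _ < 1 := by norm_num
      have hρy : ρ y ≤ C * t ^ (-(1-a)/2) := by
        refine (hρbd y hyIoo).trans ?_
        have : y ^ (-(1-a)/2) ≤ t ^ (-(1-a)/2) :=
          Real.rpow_le_rpow_of_nonpos ht0 hy1 (by linarith [h1a] : -(1-a)/2 ≤ 0)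
        nlinarith
      have hxy : x - y ≠ 0 := sub_ne_zero.mpr (Ne.symm hy)
      have hW : Wn (x - y) ≤ C' * |x - y| ^ (-a) := hWbd _ hxy
      have hgy : g y = K * |x - y| ^ (-a) := by
        rw [hgdef, Set.indicator_of_mem (Set.mem_Icc.mpr ⟨hy1, hy2⟩)]
      rw [hgy]
      calc Wn (x - y) * ρ y ≤ (C' * |x - y| ^ (-a)) * (C * t ^ (-(1-a)/2)) := by
            apply mul_le_mul hW hρy (hρ0 y) (by positivity)
        _ = K * |x - y| ^ (-a) := by rw [hKdef]; ring
  have hae : ∀ᵐ y : ℝ, Wn (x - y) * ρ y ≤ g y := by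
    have hne : ∀ᵐ y : ℝ, y ≠ x := by
      rw [ae_iff]
      have : {y : ℝ | ¬ y ≠ x} = {x} := by ext y; simp
      rw [this]; exact Real.volume_singleton
    exact hne.mono fun y hy => hpt y hy
  -- the final bound
  have hrpow : h ^ (1-a) = (n:ℝ) ^ (-1+a) := by
    rw [hhdef, one_div, ← Real.rpow_neg_one (n:ℝ), ← Real.rpow_mul hn0.le]
    congr 1; ring
  have hfinal : K * (2 * h ^ (1-a) / (1-a))
      = 2 * C * C' / (1 - a) * (n:ℝ) ^ (-1+a) * t ^ (-(1-a)/2) := by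
    rw [hKdef, hrpow]; ring
  by_cases hint : Integrable (fun y => Wn (x - y) * ρ y)
  · calc (∫ y, Wn (x - y) * ρ y) ≤ ∫ y, g y := integral_mono_ae hint hg hae
      _ = 2 * C * C' / (1 - a) * (n:ℝ) ^ (-1+a) * t ^ (-(1-a)/2) := by
          rw [hgval, hfinal]
      _ = 2 * C * C' / (1 - a) * (n:ℝ) ^ (-1+a) * (x - 1/(n:ℝ)) ^ (-(1-a)/2) := rfl
  · rw [integral_undef hint]
    have : (0:ℝ) ≤ (n:ℝ) ^ (-1+a) := Real.rpow_nonneg hn0.le _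
    have h2 : (0:ℝ) ≤ (x - 1/(n:ℝ)) ^ (-(1-a)/2) := hte
    positivity
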